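/- Let F be a number field of degree n with discriminant Δ_F, and let I be a nonzero fractional ideal of F with 1 ∈ I. Suppose γ > 0 is a constant satisfying Hermite's inequality for the ideal lattices of I: for every family u = (u_w)_w of positive reals indexed by the infinite places of F with N(u) = 1, there exists a nonzero g ∈ I with ‖g‖_u² ≤ γ·(N(I)·√|Δ_F|)^{2/n}, where N(I) is the absolute norm of I. If N(I⁻¹) > √(|Δ_F|·(γ/n)^n) (equivalently N(I⁻¹) > √(|Δ_F|/c_n) with c_n = (n/γ)^n), then I is not 1-reduced. -/

import Mathlib

open NumberField
open scoped nonZeroDivisors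

/-- `‖g‖_u² = Σ_w m_w·u_w²·w(g)²`, summing over the infinite places `w` of `F`, where `m_w` is
the multiplicity (1 for a real place, 2 for a complex place); `‖g‖_u` is its square root. -/
noncomputable def normUInf {F : Type*} [Field F] [NumberField F]
    (u : InfinitePlace F → ℝ) (g : F) : ℝ :=
  Real.sqrt (∑ w : InfinitePlace F, (w.mult : ℝ) * (u w) ^ 2 * (w g) ^ 2)

/-- `N(u) = Π_w u_w^{m_w}` over the infinite places `w` of `F`. -/
noncomputable def normProdInf {F : Type*} [Field F] [NumberField F]
    (u : InfinitePlace F → ℝ) : ℝ :=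
  ∏ w : InfinitePlace F, (u w) ^ w.mult

/-- `1` is primitive in `I`: `1 ∈ I` and no `1/d ∈ I` for an integer `d ≥ 2`. -/
def IsOnePrimitive {F : Type*} [Field F] [NumberField F]
    (I : FractionalIdeal (𝓞 F)⁰ F) : Prop :=
  (1 : F) ∈ I ∧ ∀ d : ℕ, 2 ≤ d → ((d : F))⁻¹ ∉ I

/-- `I` is 1-reduced: `1` is primitive in `I` and there is a family `u` of positive reals
indexed by the infinite places such that `1` is a shortest nonzero vector of `I` for `‖·‖_u`. -/
def IsOneReducedInf {F : Type*} [Field F] [NumberField F]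
    (I : FractionalIdeal (𝓞 F)⁰ F) : Prop :=
  IsOnePrimitive I ∧ ∃ u : InfinitePlace F → ℝ, (∀ w, 0 < u w) ∧
    ∀ g ∈ I, g ≠ 0 → normUInf u 1 ≤ normUInf u g

/-- Proposition 4.1: if `γ` satisfies Hermite's inequality for the ideal lattices of `I` and
`N(I⁻¹) > √(|Δ_F|·(γ/n)^n)`, then `I` is not 1-reduced. -/
theorem not_oneReduced_of_absNorm_inv_gt {F : Type*} [Field F] [NumberField F]
    (γ : ℝ) (hγ : 0 < γ)
    (I : FractionalIdeal (𝓞 F)⁰ F) (h1I : (1 : F) ∈ I)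
    (hHermite : ∀ u : InfinitePlace F → ℝ, (∀ w, 0 < u w) → normProdInf u = 1 →
      ∃ g ∈ I, g ≠ 0 ∧ normUInf u g ^ 2 ≤
        γ * (((FractionalIdeal.absNorm I : ℝ) * Real.sqrt |(discr F : ℝ)|) ^
          ((2 : ℝ) / (Module.finrank ℚ F : ℝ))))
    (hnorm : Real.sqrt (|(discr F : ℝ)| * (γ / (Module.finrank ℚ F : ℝ)) ^ (Module.finrank ℚ F))
      < (FractionalIdeal.absNorm I⁻¹ : ℝ)) :
    ¬ IsOneReducedInf I := by
  rintro ⟨-, u, hu, hmin⟩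
  set n : ℕ := Module.finrank ℚ F with hn_def
  have hn : 0 < n := Module.finrank_pos
  have hnR : (0 : ℝ) < (n : ℝ) := by exact_mod_cast hn
  -- normalize u
  have hP : 0 < normProdInf u := Finset.prod_pos fun w _ => pow_pos (hu w) _
  set c : ℝ := (normProdInf u) ^ (-(n : ℝ)⁻¹) with hc_def
  have hc : 0 < c := Real.rpow_pos_of_pos hP _
  set u' : InfinitePlace F → ℝ := fun w => c * u w with hu'_def
  have hu' : ∀ w, 0 < u' w := fun w => mul_pos hc (hu w)
  have hscale : ∀ g : F, normUInf u' g = c * normUInf u g := by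
    intro g
    unfold normUInf
    rw [show (∑ w : InfinitePlace F, (w.mult : ℝ) * (u' w) ^ 2 * (w g) ^ 2)
        = c ^ 2 * ∑ w : InfinitePlace F, (w.mult : ℝ) * (u w) ^ 2 * (w g) ^ 2 by
      rw [Finset.mul_sum]; refine Finset.sum_congr rfl fun w _ => ?_; simp [hu'_def]; ring]
    rw [Real.sqrt_mul (sq_nonneg c), Real.sqrt_sq hc.le]
  have hNu' : normProdInf u' = 1 := by
    unfold normProdInf
    have : ∀ w : InfinitePlace F, (u' w) ^ w.mult = c ^ w.mult * (u w) ^ w.mult := by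
      intro w; rw [hu'_def]; ring
    rw [Finset.prod_congr rfl fun w _ => this w, Finset.prod_mul_distrib,
      Finset.prod_pow_eq_pow_sum, InfinitePlace.sum_mult_eq]
    have hcn : c ^ (n : ℕ) = (normProdInf u)⁻¹ := by
      rw [hc_def, ← Real.rpow_natCast ((normProdInf u) ^ (-(n : ℝ)⁻¹)) n,
        ← Real.rpow_mul hP.le]
      rw [show -(n : ℝ)⁻¹ * (n : ℕ) = -1 by field_simp]
      exact Real.rpow_neg_one _
    rw [hcn]
    exact inv_mul_cancel₀ hP.ne'
  obtain ⟨g, hgI, hg0, hg2⟩ := hHermite u' hu' hNu'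
  have hmin' : normUInf u' 1 ≤ normUInf u' g := by
    rw [hscale, hscale]
    exact mul_le_mul_of_nonneg_left (hmin g hgI hg0) hc.le
  -- AM-GM : n ≤ ‖1‖_{u'}^2
  have hsum_nonneg : (0:ℝ) ≤ ∑ w : InfinitePlace F, (w.mult : ℝ) * (u' w) ^ 2 * (w (1:F)) ^ 2 :=
    Finset.sum_nonneg fun w _ => by positivity
  have h11 : normUInf u' 1 ^ 2 = ∑ w : InfinitePlace F, (w.mult : ℝ) * (u' w) ^ 2 := by
    unfold normUInf
    rw [Real.sq_sqrt hsum_nonneg]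
    exact Finset.sum_congr rfl fun w _ => by rw [map_one]; ring
  have hAM : (n : ℝ) ≤ ∑ w : InfinitePlace F, (w.mult : ℝ) * (u' w) ^ 2 := by
    have hw1 : ∑ w : InfinitePlace F, (w.mult : ℝ) / (n : ℝ) = 1 := by
      rw [← Finset.sum_div, ← Nat.cast_sum, InfinitePlace.sum_mult_eq]
      exact div_self hnR.ne'
    have key := Real.geom_mean_le_arith_mean_weighted Finset.univ
      (fun w : InfinitePlace F => (w.mult : ℝ) / (n : ℝ))
      (fun w : InfinitePlace F => (u' w) ^ 2)
      (fun w _ => by positivity) hw1 (fun w _ => sq_nonneg _)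
    have hlhs : (∏ w : InfinitePlace F, ((u' w) ^ 2) ^ ((w.mult : ℝ) / (n : ℝ))) = 1 := by
      have hterm : ∀ w : InfinitePlace F,
          ((u' w) ^ 2) ^ ((w.mult : ℝ) / (n : ℝ)) = ((u' w) ^ w.mult) ^ ((2 : ℝ) / (n : ℝ)) := by
        intro w
        rw [← Real.rpow_natCast (u' w) 2, ← Real.rpow_natCast (u' w) w.mult,
          ← Real.rpow_mul (hu' w).le, ← Real.rpow_mul (hu' w).le]
        congr 1
        push_cast
        ring
      rw [Finset.prod_congr rfl fun w _ => hterm w,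
        Real.finset_prod_rpow _ _ (fun w _ => pow_nonneg (hu' w).le _) _]
      have : (∏ w : InfinitePlace F, (u' w) ^ w.mult) = 1 := hNu'
      rw [this, Real.one_rpow]
    rw [hlhs] at key
    calc (n : ℝ) = (n : ℝ) * 1 := by ring
    _ ≤ (n : ℝ) * ∑ w : InfinitePlace F, (w.mult : ℝ) / (n : ℝ) * (u' w) ^ 2 :=
        mul_le_mul_of_nonneg_left key hnR.le
    _ = ∑ w : InfinitePlace F, (w.mult : ℝ) * (u' w) ^ 2 := by
        rw [Finset.mul_sum]
        exact Finset.sum_congr rfl fun w _ => by field_simp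
  -- combine: n ≤ γ * X ^ (2/n)
  set X : ℝ := (FractionalIdeal.absNorm I : ℝ) * Real.sqrt |(discr F : ℝ)| with hX_def
  have hchain : (n : ℝ) ≤ γ * X ^ ((2 : ℝ) / (n : ℝ)) := by
    calc (n : ℝ) ≤ ∑ w : InfinitePlace F, (w.mult : ℝ) * (u' w) ^ 2 := hAM
    _ = normUInf u' 1 ^ 2 := h11.symm
    _ ≤ normUInf u' g ^ 2 := by
        apply pow_le_pow_left₀ (Real.sqrt_nonneg _) hmin'
    _ ≤ γ * X ^ ((2 : ℝ) / (n : ℝ)) := hg2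
  -- the other direction from hnorm
  have hI0 : I ≠ 0 := by
    intro h
    rw [h] at h1I
    exact one_ne_zero ((FractionalIdeal.mem_zero_iff _).mp h1I)
  have hNI : (0 : ℝ) < (FractionalIdeal.absNorm I : ℝ) := by
    have h1 : FractionalIdeal.absNorm I ≠ 0 := fun h =>
      hI0 (FractionalIdeal.absNorm_eq_zero_iff.mp h)
    have h2 := FractionalIdeal.absNorm_nonneg I
    exact_mod_cast lt_of_le_of_ne h2 (Ne.symm h1)
  have hΔ : (0 : ℝ) < |(discr F : ℝ)| := by
    rw [abs_pos]
    exact_mod_cast NumberField.discr_ne_zero F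
  have hX : 0 < X := mul_pos hNI (Real.sqrt_pos.mpr hΔ)
  have hinv : (FractionalIdeal.absNorm I⁻¹ : ℝ) = ((FractionalIdeal.absNorm I : ℝ))⁻¹ := by
    rw [map_inv₀ FractionalIdeal.absNorm I, Rat.cast_inv]
  set B : ℝ := γ / (n : ℝ) with hB_def
  have hB : 0 < B := div_pos hγ hnR
  have hsq : Real.sqrt (|(discr F : ℝ)| * B ^ n)
      = Real.sqrt |(discr F : ℝ)| * B ^ ((n : ℝ) / 2) := by
    rw [Real.sqrt_mul hΔ.le, Real.sqrt_eq_rpow (B ^ n), ← Real.rpow_natCast B n,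
      ← Real.rpow_mul hB.le]
    congr 1
    ring
  rw [hinv, hsq] at hnorm
  have hBp : 0 < B ^ ((n : ℝ) / 2) := Real.rpow_pos_of_pos hB _
  have hXinv : B ^ ((n : ℝ) / 2) < X⁻¹ := by
    calc B ^ ((n : ℝ) / 2)
        = Real.sqrt |(discr F : ℝ)| * B ^ ((n : ℝ) / 2) * (Real.sqrt |(discr F : ℝ)|)⁻¹ := by
          field_simp
      _ < ((FractionalIdeal.absNorm I : ℝ))⁻¹ * (Real.sqrt |(discr F : ℝ)|)⁻¹ := by
          apply mul_lt_mul_of_pos_right hnorm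
          exact inv_pos.mpr (Real.sqrt_pos.mpr hΔ)
      _ = X⁻¹ := by rw [hX_def, mul_inv]
  have hXmul : X * B ^ ((n : ℝ) / 2) < 1 := by
    have := mul_lt_mul_of_pos_left hXinv hX
    rwa [mul_inv_cancel₀ hX.ne'] at this
  have hXlt : X < (B ^ ((n : ℝ) / 2))⁻¹ := by
    rw [← one_div]
    exact (lt_div_iff₀ hBp).mpr hXmul
  have hexp : (0 : ℝ) < (2 : ℝ) / (n : ℝ) := by positivity
  have hfin : X ^ ((2 : ℝ) / (n : ℝ)) < (n : ℝ) / γ := by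
    have h2 : X ^ ((2 : ℝ) / (n : ℝ)) < ((B ^ ((n : ℝ) / 2))⁻¹) ^ ((2 : ℝ) / (n : ℝ)) :=
      Real.rpow_lt_rpow hX.le hXlt hexp
    have h3 : ((B ^ ((n : ℝ) / 2))⁻¹) ^ ((2 : ℝ) / (n : ℝ)) = (n : ℝ) / γ := by
      rw [← Real.rpow_neg hB.le, ← Real.rpow_mul hB.le,
        show -((n : ℝ) / 2) * ((2 : ℝ) / (n : ℝ)) = -1 by field_simp,
        Real.rpow_neg_one, hB_def, inv_div]
    rw [h3] at h2
    exact h2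
  have : γ * X ^ ((2 : ℝ) / (n : ℝ)) < (n : ℝ) := by
    have := mul_lt_mul_of_pos_left hfin hγ
    rwa [mul_div_cancel₀ _ hγ.ne'] at this
  linarith
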